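/- Let z ∈ ℝ^d with ‖z‖₂ = 1 and g(x) = (1/2)‖zzᵀ − xxᵀ‖_F². If the Hessian ∇²g(x) = 2xxᵀ − zzᵀ + ‖x‖₂² I is positive semidefinite, then ‖x‖₂² ≥ 1/3. -/

import Mathlib

open Matrix Finset

lemma quadform_vecMulVec {d : ℕ} (z x : Fin d → ℝ) :
    z ⬝ᵥ (vecMulVec x x *ᵥ z) = (∑ i, x i * z i) ^ 2 := by
  have : z ⬝ᵥ (vecMulVec x x *ᵥ z) = (∑ i, z i * x i) * (∑ i, x i * z i) := by
    simp [mulVec, vecMulVec, dotProduct, Finset.mul_sum, Finset.sum_mul, mul_assoc]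
    exact Finset.sum_comm
  rw [this, sq]
  congr 1
  exact Finset.sum_congr rfl fun i _ => mul_comm _ _

/-- For z with ‖z‖₂ = 1 and g(x) = (1/2)‖zzᵀ − xxᵀ‖_F², if the Hessian
∇²g(x) = 2xxᵀ − zzᵀ + ‖x‖₂² I is positive semidefinite, then ‖x‖₂² ≥ 1/3. -/
theorem stmt12 {d : ℕ} (z : Fin d → ℝ) (hz : ∑ i, z i ^ 2 = 1)
    (x : Fin d → ℝ)
    (hHess : ((2 : ℝ) • vecMulVec x x - vecMulVec z z
        + (∑ i, x i ^ 2) • (1 : Matrix (Fin d) (Fin d) ℝ)).PosSemidef) :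
    (1 / 3 : ℝ) ≤ ∑ i, x i ^ 2 := by
  have h := hHess.dotProduct_mulVec_nonneg z
  have hq : (star z) ⬝ᵥ (((2 : ℝ) • vecMulVec x x - vecMulVec z z
      + (∑ i, x i ^ 2) • (1 : Matrix (Fin d) (Fin d) ℝ)) *ᵥ z)
      = 2 * (∑ i, x i * z i) ^ 2 - 1 + ∑ i, x i ^ 2 := by
    have hzz2 : (∑ i, z i * z i) = 1 := by simpa [sq] using hz
    simp only [star_trivial, add_mulVec, sub_mulVec, smul_mulVec, one_mulVec,
      dotProduct_add, dotProduct_sub, dotProduct_smul, quadform_vecMulVec,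
      smul_eq_mul]
    rw [show (∑ i, z i * z i) ^ 2 = 1 by rw [hzz2]; ring]
    rw [show z ⬝ᵥ z = 1 from hzz2]
    ring
  rw [hq] at h
  have hcs : (∑ i, x i * z i) ^ 2 ≤ (∑ i, x i ^ 2) * (∑ i, z i ^ 2) :=
    Finset.sum_mul_sq_le_sq_mul_sq _ _ _
  rw [hz, mul_one] at hcs
  nlinarith
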